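/- Let A = (a_{ij}) be an n×n positive matrix (n ≥ 3) and let B = (b_{ij}) be its doubly stochastic scaling. Then for all indices k, l: ln b_{kl} ≤ ln a_{kl} − (1/(n−2)) Σ_{j≠l} ln a_{kj} − (1/(n−2)) Σ_{i≠k} ln a_{il} + (n/(n−2)) ln((1/n) Σ_{i,j} a_{ij}) − ((2n−2)/(n−2)) ln(n−1). -/

import Mathlib

open Finset

lemma jensen_log {ι : Type*} (s : Finset ι) (w x : ι → ℝ)
    (hw : ∀ i ∈ s, 0 ≤ w i) (hw1 : ∑ i ∈ s, w i = 1)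
    (hx : ∀ i ∈ s, 0 < x i) :
    ∑ i ∈ s, w i * Real.log (x i) ≤ Real.log (∑ i ∈ s, w i * x i) := by
  have h := (strictConcaveOn_log_Ioi.concaveOn).le_map_sum hw hw1
    (fun i hi => Set.mem_Ioi.mpr (hx i hi))
  simpa [smul_eq_mul] using h

lemma sum_log_le_aux {ι : Type*} (s : Finset ι) (hs : s.Nonempty) (x : ι → ℝ)
    (hx : ∀ i ∈ s, 0 < x i) (hsum : ∑ i ∈ s, x i ≤ 1) :
    ∑ i ∈ s, Real.log (x i) ≤ -(s.card : ℝ) * Real.log (s.card) := by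
  set m : ℝ := (s.card : ℝ) with hm
  have hm0 : 0 < m := by rw [hm]; exact_mod_cast Finset.card_pos.mpr hs
  have hj := jensen_log s (fun _ => 1 / m) x (fun i _ => by positivity)
    (by rw [Finset.sum_const, nsmul_eq_mul]; field_simp; exact hm.symm) hx
  have hsum' : ∑ i ∈ s, (1 / m) * x i = (1 / m) * ∑ i ∈ s, x i := by
    rw [Finset.mul_sum]
  have hpos : 0 < ∑ i ∈ s, x i := Finset.sum_pos hx hs
  have hle : Real.log ((1 / m) * ∑ i ∈ s, x i) ≤ Real.log (1 / m) := by
    have h' := mul_le_mul_of_nonneg_left hsum (by positivity : (0:ℝ) ≤ 1 / m)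
    exact Real.log_le_log (by positivity) (by linarith)
  have hlhs : ∑ i ∈ s, (1 / m) * Real.log (x i) = (1 / m) * ∑ i ∈ s, Real.log (x i) := by
    rw [Finset.mul_sum]
  have h1 : (1 / m) * ∑ i ∈ s, Real.log (x i) ≤ Real.log (1 / m) := by
    calc (1 / m) * ∑ i ∈ s, Real.log (x i) = ∑ i ∈ s, (1 / m) * Real.log (x i) := hlhs.symm
      _ ≤ Real.log (∑ i ∈ s, (1 / m) * x i) := hj
      _ = Real.log ((1 / m) * ∑ i ∈ s, x i) := by rw [hsum']
      _ ≤ Real.log (1 / m) := hle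
  have h2 : Real.log (1 / m) = -Real.log m := by
    rw [one_div, Real.log_inv]
  rw [h2] at h1
  have := mul_le_mul_of_nonneg_left h1 hm0.le
  have hne : m ≠ 0 := hm0.ne'
  calc ∑ i ∈ s, Real.log (x i) = m * ((1 / m) * ∑ i ∈ s, Real.log (x i)) := by
        field_simp
    _ ≤ m * (-Real.log m) := this
    _ = -m * Real.log m := by ring

/-- Entrywise bound on the doubly stochastic scaling `B` of a positive matrix `A`:
for all `k, l`,
`ln b_{kl} ≤ ln a_{kl} − (1/(n−2)) Σ_{j≠l} ln a_{kj} − (1/(n−2)) Σ_{i≠k} ln a_{il}`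
`+ (n/(n−2)) ln((1/n) Σ_{i,j} a_{ij}) − ((2n−2)/(n−2)) ln(n−1)`. -/
theorem scaling_entry_bound (n : ℕ) (hn : 3 ≤ n)
    (A B : Matrix (Fin n) (Fin n) ℝ) (lam mu : Fin n → ℝ)
    (hApos : ∀ i j, 0 < A i j)
    (hlam : ∀ i, 0 < lam i) (hmu : ∀ j, 0 < mu j)
    (hscal : ∀ i j, A i j = B i j * lam i * mu j)
    (hBnonneg : ∀ i j, 0 ≤ B i j)
    (hBrow : ∀ i, ∑ j, B i j = 1) (hBcol : ∀ j, ∑ i, B i j = 1) :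
    ∀ k l, Real.log (B k l) ≤
      Real.log (A k l)
        - (1 / (n - 2 : ℝ)) * ∑ j ∈ univ.erase l, Real.log (A k j)
        - (1 / (n - 2 : ℝ)) * ∑ i ∈ univ.erase k, Real.log (A i l)
        + ((n : ℝ) / (n - 2)) * Real.log ((1 / n) * ∑ i, ∑ j, A i j)
        - ((2 * n - 2 : ℝ) / (n - 2)) * Real.log (n - 1) := by
  intro k l
  have hn3 : (3 : ℝ) ≤ (n : ℝ) := by exact_mod_cast hn
  have hc : (0 : ℝ) < (n : ℝ) - 2 := by linarith
  have hc' : ((n : ℝ) - 2) ≠ 0 := hc.ne'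
  have hn0 : (0 : ℝ) < (n : ℝ) := by linarith
  have hBpos : ∀ i j, 0 < B i j := fun i j => by
    have h1 : 0 < B i j * (lam i * mu j) := by
      rw [← mul_assoc, ← hscal i j]; exact hApos i j
    rcases mul_pos_iff.mp h1 with ⟨h, _⟩ | ⟨_, h⟩
    · exact h
    · exact absurd h (not_lt.mpr (mul_pos (hlam i) (hmu j)).le)
  have hlog : ∀ i j, Real.log (A i j)
      = Real.log (B i j) + Real.log (lam i) + Real.log (mu j) := fun i j => by
    rw [hscal i j, Real.log_mul (mul_pos (hBpos i j) (hlam i)).ne' (hmu j).ne',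
      Real.log_mul (hBpos i j).ne' (hlam i).ne']
  have hcast : ((n - 1 : ℕ) : ℝ) = (n : ℝ) - 1 := by
    have : 1 ≤ n := by omega
    push_cast [this]; ring
  set Llam := ∑ i, Real.log (lam i) with hLlam
  set Mmu := ∑ j, Real.log (mu j) with hMmu
  set K := Real.log ((n : ℝ) - 1) with hK
  set R1 := ∑ j ∈ univ.erase l, Real.log (B k j) with hR1
  set R2 := ∑ i ∈ univ.erase k, Real.log (B i l) with hR2
  set T := Real.log ((1 / (n : ℝ)) * ∑ i, ∑ j, A i j) with hT
  -- expand row / column sums of log A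
  have eq2 : ∑ j ∈ univ.erase l, Real.log (A k j)
      = R1 + ((n : ℝ) - 1) * Real.log (lam k) + (Mmu - Real.log (mu l)) := by
    simp_rw [hlog]
    rw [hR1, hMmu]
    simp only [Finset.sum_add_distrib, Finset.sum_erase_eq_sub (Finset.mem_univ l),
      Finset.sum_const, Finset.card_univ, Fintype.card_fin, nsmul_eq_mul]
    ring
  have eq3 : ∑ i ∈ univ.erase k, Real.log (A i l)
      = R2 + (Llam - Real.log (lam k)) + ((n : ℝ) - 1) * Real.log (mu l) := by
    simp_rw [hlog]
    rw [hR2, hLlam]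
    simp only [Finset.sum_add_distrib, Finset.sum_erase_eq_sub (Finset.mem_univ k),
      Finset.sum_const, Finset.card_univ, Fintype.card_fin, nsmul_eq_mul]
    ring
  -- bound R1 and R2 via AM-GM
  have cardErase : ∀ (a : Fin n), ((univ.erase a).card : ℝ) = (n : ℝ) - 1 := fun a => by
    rw [Finset.card_erase_of_mem (Finset.mem_univ a), Finset.card_univ, Fintype.card_fin, hcast]
  have hNE : ∀ (a : Fin n), (univ.erase a).Nonempty := fun a => by
    rw [← Finset.card_pos, Finset.card_erase_of_mem (Finset.mem_univ a), Finset.card_univ,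
      Fintype.card_fin]
    omega
  have h1 : R1 ≤ -((n : ℝ) - 1) * K := by
    have := sum_log_le_aux (univ.erase l) (hNE l) (fun j => B k j)
      (fun j _ => hBpos k j)
      (by rw [Finset.sum_erase_eq_sub (Finset.mem_univ l), hBrow k]
          linarith [hBnonneg k l])
    rwa [cardErase l] at this
  have h2 : R2 ≤ -((n : ℝ) - 1) * K := by
    have := sum_log_le_aux (univ.erase k) (hNE k) (fun i => B i l)
      (fun i _ => hBpos i l)
      (by rw [Finset.sum_erase_eq_sub (Finset.mem_univ k), hBcol l]
          linarith [hBnonneg k l])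
    rwa [cardErase k] at this
  -- Jensen for the total sum
  have hLsum : ∑ i, ∑ j, B i j * (Real.log (lam i) + Real.log (mu j)) = Llam + Mmu := by
    simp_rw [mul_add, Finset.sum_add_distrib]
    congr 1
    · refine Finset.sum_congr rfl fun i _ => ?_
      rw [← Finset.sum_mul, hBrow i, one_mul]
    · rw [Finset.sum_comm]
      refine Finset.sum_congr rfl fun j _ => ?_
      rw [← Finset.sum_mul, hBcol j, one_mul]
  have hj3 := jensen_log (univ : Finset (Fin n × Fin n))
    (fun p => B p.1 p.2 / n) (fun p => lam p.1 * mu p.2)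
    (fun p _ => div_nonneg (hBnonneg p.1 p.2) hn0.le)
    (by
      rw [← Finset.sum_div, Fintype.sum_prod_type]
      simp_rw [hBrow]
      rw [Finset.sum_const, Finset.card_univ, Fintype.card_fin, nsmul_eq_mul, mul_one,
        div_self hn0.ne'])
    (fun p _ => mul_pos (hlam p.1) (hmu p.2))
  have hjl : ∑ p : Fin n × Fin n, (B p.1 p.2 / n) * Real.log (lam p.1 * mu p.2)
      = (1 / n) * (Llam + Mmu) := by
    rw [← hLsum, Fintype.sum_prod_type, Finset.mul_sum]
    refine Finset.sum_congr rfl fun i _ => ?_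
    rw [Finset.mul_sum]
    refine Finset.sum_congr rfl fun j _ => ?_
    rw [Real.log_mul (hlam i).ne' (hmu j).ne']
    ring
  have hjr : ∑ p : Fin n × Fin n, (B p.1 p.2 / n) * (lam p.1 * mu p.2)
      = (1 / (n : ℝ)) * ∑ i, ∑ j, A i j := by
    rw [Fintype.sum_prod_type, Finset.mul_sum]
    refine Finset.sum_congr rfl fun i _ => ?_
    rw [Finset.mul_sum]
    refine Finset.sum_congr rfl fun j _ => ?_
    rw [hscal i j]; ring
  have h3 : Llam + Mmu ≤ (n : ℝ) * T := by
    rw [hjl, hjr, ← hT] at hj3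
    have := mul_le_mul_of_nonneg_left hj3 hn0.le
    calc Llam + Mmu = (n : ℝ) * ((1 / n) * (Llam + Mmu)) := by field_simp
      _ ≤ (n : ℝ) * T := this
  -- put everything together
  rw [hlog k l, eq2, eq3]
  have hX : 0 ≤ (1 / ((n : ℝ) - 2)) * ((-(((n : ℝ) - 1) * K) - R1)
      + (-(((n : ℝ) - 1) * K) - R2) + ((n : ℝ) * T - Llam - Mmu)) := by
    apply mul_nonneg (by positivity)
    linarith
  refine le_trans (le_add_of_nonneg_right hX) (le_of_eq ?_)
  field_simp
  ring
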